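/- Let F : [−1,1] → ℝ be defined by F(x) = x for x ∈ [0,1] and F(x) = 0.2·x for x ∈ [−1,0]. Then: (i) F is exactly realized by a one-hidden-layer, width-1 LeakyReLU network, namely F(x) = LeakyReLU_{0.2}(x) for all x ∈ [−1,1]; and (ii) there exists ε > 0 (one may take ε = 1/220) such that for all real parameters w₀, b₀, w₁, b₁, the one-hidden-layer width-1 network Φ(x) = w₁ · LeakyReLU_{0.1}(w₀ x + b₀) + b₁ satisfies sup_{x ∈ [−1,1]} |Φ(x) − F(x)| ≥ ε. Hence F cannot be approximated arbitrarily well on [−1,1] by one-hidden-layer width-1 networks with the fixed activation LeakyReLU_{0.1}. -/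
import Mathlib
set_option maxHeartbeats 1000000

noncomputable def leakyReLU (β : ℝ) (x : ℝ) : ℝ := if 0 ≤ x then x else β * x

theorem leaky_depth_disadvantage (F : ℝ → ℝ)
    (hF : ∀ x ∈ Set.Icc (-1 : ℝ) 1, F x = if 0 ≤ x then x else 0.2 * x) :
    (∀ x ∈ Set.Icc (-1 : ℝ) 1, F x = leakyReLU 0.2 x) ∧
    ∃ ε > (0 : ℝ), ∀ w₀ b₀ w₁ b₁ : ℝ,
      ∃ x ∈ Set.Icc (-1 : ℝ) 1, ε ≤ |w₁ * leakyReLU 0.1 (w₀ * x + b₀) + b₁ - F x| := by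
  constructor
  · intro x hx
    rw [hF x hx, leakyReLU]
  · refine ⟨1/220, by norm_num, fun w₀ b₀ w₁ b₁ => ?_⟩
    by_contra h
    push_neg at h
    have hv : ∀ x ∈ Set.Icc (-1:ℝ) 1,
        |w₁ * leakyReLU 0.1 (w₀*x+b₀) + b₁ - (if 0 ≤ x then x else 0.2*x)| < 1/220 := by
      intro x hx; rw [← hF x hx]; exact h x hx
    have e1 := hv (-1) (by constructor <;> norm_num)
    have e2 := hv (-1/2) (by constructor <;> norm_num)
    have e3 := hv 0 (by constructor <;> norm_num)
    have e4 := hv (1/2) (by constructor <;> norm_num)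
    have e5 := hv 1 (by constructor <;> norm_num)
    simp only [leakyReLU] at e1 e2 e3 e4 e5
    norm_num at e1 e2 e3 e4 e5
    rw [abs_lt] at e1 e2 e3 e4 e5
    obtain ⟨a1, b1⟩ := e1
    obtain ⟨a2, b2⟩ := e2
    obtain ⟨a3, b3⟩ := e3
    obtain ⟨a4, b4⟩ := e4
    obtain ⟨a5, b5⟩ := e5
    split_ifs at a1 a2 a3 a4 a5 b1 b2 b3 b4 b5 <;> linarith
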